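/- Let n ≥ 2 and d ≥ 1 be integers and let A_0, A_α, A_{αα} (1 ≤ α ≤ d) be real numbers. Then P_Q(X,Y) = A_0 + √n Σ_{α=1}^d A_α X_α + (n − 1) Σ_{α=1}^d A_{αα} X_α² − n Σ_{α=1}^d A_{αα} Y_α² ≥ 0 for all X, Y ∈ ℝ^d with ‖Y‖² + ‖X‖²/n ≤ 1 if and only if there exists c ≥ 0 such that the (2d+1)×(2d+1) real symmetric matrix M(c), with rows and columns indexed by 0, 1, …, 2d and whose only nonzero entries are M(c)_{0,0} = A_0 − c, M(c)_{0,α} = M(c)_{α,0} = (√n/2) A_α for 1 ≤ α ≤ d, M(c)_{α,α} = (n − 1) A_{αα} + c/n for 1 ≤ α ≤ d, and M(c)_{d+α, d+α} = −n A_{αα} + c for 1 ≤ α ≤ d, is positive semidefinite. -/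

import Mathlib

open scoped BigOperators

/-- `PQ n d A0 A B X Y = A0 + √n ∑ A_α X_α + (n-1) ∑ A_{αα} X_α² - n ∑ A_{αα} Y_α²` -/
noncomputable def PQ (n d : ℕ) (A0 : ℝ) (A B : Fin d → ℝ) (X Y : Fin d → ℝ) : ℝ :=
  A0 + Real.sqrt n * ∑ α, A α * X α
    + ((n : ℝ) - 1) * ∑ α, B α * (X α) ^ 2
    - n * ∑ α, B α * (Y α) ^ 2

/-- Extend a vector indexed by `Fin d` to `ℕ` by zero. -/
noncomputable def ext (d : ℕ) (A : Fin d → ℝ) (k : ℕ) : ℝ :=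
  if h : k < d then A ⟨k, h⟩ else 0

/-- The matrix `M(c)` of size `(2d+1) × (2d+1)`, with rows and columns indexed by
`0, 1, …, 2d`; its only nonzero entries are `M(c)_{0,0} = A_0 − c`,
`M(c)_{0,α} = M(c)_{α,0} = (√n/2) A_α` for `1 ≤ α ≤ d`,
`M(c)_{α,α} = (n − 1) A_{αα} + c/n` for `1 ≤ α ≤ d`, and
`M(c)_{d+α,d+α} = −n A_{αα} + c` for `1 ≤ α ≤ d`. -/
noncomputable def Mc (n d : ℕ) (A0 : ℝ) (A B : Fin d → ℝ) (c : ℝ) :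
    Matrix (Fin (2 * d + 1)) (Fin (2 * d + 1)) ℝ :=
  fun i j =>
    if i.val = 0 ∧ j.val = 0 then A0 - c
    else if i.val = 0 ∧ 1 ≤ j.val ∧ j.val ≤ d then
      Real.sqrt n / 2 * ext d A (j.val - 1)
    else if j.val = 0 ∧ 1 ≤ i.val ∧ i.val ≤ d then
      Real.sqrt n / 2 * ext d A (i.val - 1)
    else if i = j ∧ 1 ≤ i.val ∧ i.val ≤ d then
      ((n : ℝ) - 1) * ext d B (i.val - 1) + c / n
    else if i = j ∧ d + 1 ≤ i.val then
      -(n : ℝ) * ext d B (i.val - d - 1) + c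
    else 0


open Matrix

def i0 (d : ℕ) : Fin (2*d+1) := ⟨0, by omega⟩
def ix (d : ℕ) (α : Fin d) : Fin (2*d+1) := ⟨α.1+1, by omega⟩
def iy (d : ℕ) (α : Fin d) : Fin (2*d+1) := ⟨d+α.1+1, by omega⟩

noncomputable def Dc (n d : ℕ) (B : Fin d → ℝ) (c : ℝ) (α : Fin d) : ℝ :=
  ((n:ℝ) - 1) * B α + c / n

lemma cases_index (d : ℕ) (i : Fin (2*d+1)) :
    i = i0 d ∨ (∃ α, i = ix d α) ∨ (∃ α, i = iy d α) := by
  rcases i with ⟨k, hk⟩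
  rcases Nat.lt_or_ge k 1 with h | h
  · exact Or.inl (Fin.ext (by simp [i0]; omega))
  rcases Nat.lt_or_ge k (d+1) with h2 | h2
  · exact Or.inr (Or.inl ⟨⟨k-1, by omega⟩, Fin.ext (by simp [ix]; omega)⟩)
  · exact Or.inr (Or.inr ⟨⟨k-d-1, by omega⟩, Fin.ext (by simp [iy]; omega)⟩)

open Finset in
theorem sum_split (d:ℕ) (g : Fin (2*d+1) → ℝ) :
  ∑ i, g i = g (i0 d) + ((∑ α : Fin d, g (ix d α)) + ∑ α : Fin d, g (iy d α)) := by
  have key : ∀ (m : ℕ) (hm : m = 1 + d + d) (gg : Fin m → ℝ),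
      ∑ i, gg i = gg ⟨0, by omega⟩ + ((∑ α : Fin d, gg ⟨α.1+1, by omega⟩) + ∑ α : Fin d, gg ⟨d+α.1+1, by omega⟩) := by
    intro m hm gg
    subst hm
    set G : ℕ → ℝ := fun k => if h : k < 1+d+d then gg ⟨k,h⟩ else 0 with hG
    have h1 : ∑ i, gg i = ∑ k ∈ range (1+d+d), G k := by
      rw [← Fin.sum_univ_eq_sum_range]
      exact Finset.sum_congr rfl fun i _ => by simp [hG, i.2]
    rw [h1, Finset.sum_range_add, Finset.sum_range_add, Finset.sum_range_one, add_assoc]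
    congr 1
    · simp [hG]
    congr 1
    · rw [← Fin.sum_univ_eq_sum_range (fun k => G (1+k)) d]
      refine Finset.sum_congr rfl fun α _ => ?_
      have h : 1+α.1 < 1+d+d := by omega
      simp only [hG, dif_pos h]
      congr 1
      exact Fin.ext (by simp [add_comm])
    · rw [← Fin.sum_univ_eq_sum_range (fun k => G (1+d+k)) d]
      refine Finset.sum_congr rfl fun α _ => ?_
      have h : 1+d+α.1 < 1+d+d := by omega
      simp only [hG, dif_pos h]
      congr 1
      exact Fin.ext (by simp; omega)
  have := key (2*d+1) (by omega) g
  rw [this]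
  rfl


section
variable (n d : ℕ) (A0 : ℝ) (A B : Fin d → ℝ) (c : ℝ)

lemma Mc_00 : Mc n d A0 A B c (i0 d) (i0 d) = A0 - c := by
  simp [Mc, i0]

lemma Mc_0x (α : Fin d) : Mc n d A0 A B c (i0 d) (ix d α) = Real.sqrt n / 2 * A α := by
  have h := α.2
  simp [Mc, i0, ix, _root_.ext, Nat.succ_le_of_lt h, h, Fin.eta]

lemma Mc_x0 (α : Fin d) : Mc n d A0 A B c (ix d α) (i0 d) = Real.sqrt n / 2 * A α := by
  have h := α.2
  simp [Mc, i0, ix, _root_.ext, Nat.succ_le_of_lt h, h, Fin.eta]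

lemma Mc_0y (α : Fin d) : Mc n d A0 A B c (i0 d) (iy d α) = 0 := by
  have h := α.2
  dsimp only [Mc, i0, iy]
  rw [if_neg (by omega), if_neg (by omega), if_neg (by omega),
    if_neg (by simp only [Fin.ext_iff]; omega), if_neg (by simp only [Fin.ext_iff]; omega)]

lemma Mc_y0 (α : Fin d) : Mc n d A0 A B c (iy d α) (i0 d) = 0 := by
  have h := α.2
  dsimp only [Mc, i0, iy]
  rw [if_neg (by omega), if_neg (by omega), if_neg (by omega),
    if_neg (by simp only [Fin.ext_iff]; omega), if_neg (by simp only [Fin.ext_iff]; omega)]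

lemma Mc_xy (α β : Fin d) : Mc n d A0 A B c (ix d α) (iy d β) = 0 := by
  have h := α.2; have h2 := β.2
  dsimp only [Mc, ix, iy]
  rw [if_neg (by omega), if_neg (by omega), if_neg (by omega),
    if_neg (by simp only [Fin.ext_iff]; omega), if_neg (by simp only [Fin.ext_iff]; omega)]

lemma Mc_yx (α β : Fin d) : Mc n d A0 A B c (iy d α) (ix d β) = 0 := by
  have h := α.2; have h2 := β.2
  dsimp only [Mc, ix, iy]
  rw [if_neg (by omega), if_neg (by omega), if_neg (by omega),
    if_neg (by simp only [Fin.ext_iff]; omega), if_neg (by simp only [Fin.ext_iff]; omega)]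

lemma Mc_xx (α β : Fin d) :
    Mc n d A0 A B c (ix d α) (ix d β)
      = if α = β then ((n : ℝ) - 1) * B α + c / n else 0 := by
  have h := α.2; have h2 := β.2
  by_cases hab : α = β
  · subst hab
    simp only [Mc, ix]
    rw [if_neg (by omega), if_neg (by omega), if_neg (by omega),
      if_pos ⟨trivial, by omega, by omega⟩]
    simp [_root_.ext, h, Fin.eta]
  · rw [if_neg hab]
    dsimp only [Mc, ix]
    rw [if_neg (by omega), if_neg (by omega), if_neg (by omega),
      if_neg (by simp only [Fin.ext_iff]; intro hq; exact hab (Fin.ext (by omega))),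
      if_neg (by simp only [Fin.ext_iff]; omega)]

lemma Mc_yy (α β : Fin d) :
    Mc n d A0 A B c (iy d α) (iy d β)
      = if α = β then -(n : ℝ) * B α + c else 0 := by
  have h := α.2; have h2 := β.2
  by_cases hab : α = β
  · subst hab
    simp only [Mc, iy]
    rw [if_neg (by omega), if_neg (by omega), if_neg (by omega),
      if_neg (by simp only [true_and]; omega), if_pos ⟨trivial, by omega⟩]
    have he : d + α.1 + 1 - d - 1 = α.1 := by omega
    simp [_root_.ext, he, h, Fin.eta]
  · rw [if_neg hab]
    dsimp only [Mc, iy]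
    rw [if_neg (by omega), if_neg (by omega), if_neg (by omega),
      if_neg (by simp only [Fin.ext_iff]; omega),
      if_neg (by simp only [Fin.ext_iff]; intro hq; exact hab (Fin.ext (by omega)))]
end


section
variable (n d : ℕ) (A0 : ℝ) (A B : Fin d → ℝ) (c : ℝ)
lemma Mc_herm : (Mc n d A0 A B c).IsHermitian := by
  show (Mc n d A0 A B c)ᴴ = Mc n d A0 A B c
  ext i j
  rw [Matrix.conjTranspose_apply, star_trivial]
  rcases cases_index d i with rfl | ⟨α, rfl⟩ | ⟨α, rfl⟩ <;>
    rcases cases_index d j with rfl | ⟨β, rfl⟩ | ⟨β, rfl⟩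
  · rfl
  · rw [Mc_0x, Mc_x0]
  · rw [Mc_0y, Mc_y0]
  · rw [Mc_0x, Mc_x0]
  · rw [Mc_xx, Mc_xx]
    rcases eq_or_ne α β with rfl | hab
    · simp
    · rw [if_neg hab, if_neg (Ne.symm hab)]
  · rw [Mc_xy, Mc_yx]
  · rw [Mc_0y, Mc_y0]
  · rw [Mc_xy, Mc_yx]
  · rw [Mc_yy, Mc_yy]
    rcases eq_or_ne α β with rfl | hab
    · simp
    · rw [if_neg hab, if_neg (Ne.symm hab)]

lemma quadform (v : Fin (2*d+1) → ℝ) :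
    v ⬝ᵥ (Mc n d A0 A B c) *ᵥ v
      = (A0 - c) * (v (i0 d))^2
        + ∑ α, (Real.sqrt n * A α * (v (i0 d) * v (ix d α))
          + (((n:ℝ)-1) * B α + c/n) * (v (ix d α))^2
          + (-(n:ℝ) * B α + c) * (v (iy d α))^2) := by
  have hdot : v ⬝ᵥ (Mc n d A0 A B c) *ᵥ v
      = ∑ i, v i * ∑ j, Mc n d A0 A B c i j * v j := by
    rw [dotProduct]
    exact Finset.sum_congr rfl fun i _ => rfl
  rw [hdot, sum_split d (fun i => v i * ∑ j, Mc n d A0 A B c i j * v j)]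
  have row0 : ∑ j, Mc n d A0 A B c (i0 d) j * v j
      = (A0 - c) * v (i0 d) + ∑ α, Real.sqrt n / 2 * A α * v (ix d α) := by
    rw [sum_split d (fun j => Mc n d A0 A B c (i0 d) j * v j), Mc_00]
    congr 1
    rw [show (∑ α, Mc n d A0 A B c (i0 d) (iy d α) * v (iy d α)) = 0 from
      Finset.sum_eq_zero fun α _ => by rw [Mc_0y]; ring]
    rw [add_zero]
    exact Finset.sum_congr rfl fun α _ => by rw [Mc_0x]
  have rowx : ∀ α, ∑ j, Mc n d A0 A B c (ix d α) j * v j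
      = Real.sqrt n / 2 * A α * v (i0 d) + (((n:ℝ)-1) * B α + c/n) * v (ix d α) := by
    intro α
    rw [sum_split d (fun j => Mc n d A0 A B c (ix d α) j * v j), Mc_x0]
    congr 1
    rw [show (∑ β, Mc n d A0 A B c (ix d α) (iy d β) * v (iy d β)) = 0 from
      Finset.sum_eq_zero fun β _ => by rw [Mc_xy]; ring]
    rw [add_zero]
    have h : ∀ β, Mc n d A0 A B c (ix d α) (ix d β) * v (ix d β)
        = if α = β then (((n:ℝ)-1) * B α + c/n) * v (ix d β) else 0 := by
      intro β; rw [Mc_xx]; split_ifs <;> ring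
    rw [Finset.sum_congr rfl fun β _ => h β, Finset.sum_ite_eq]
    simp
  have rowy : ∀ α, ∑ j, Mc n d A0 A B c (iy d α) j * v j
      = (-(n:ℝ) * B α + c) * v (iy d α) := by
    intro α
    rw [sum_split d (fun j => Mc n d A0 A B c (iy d α) j * v j), Mc_y0, zero_mul, zero_add]
    rw [show (∑ β, Mc n d A0 A B c (iy d α) (ix d β) * v (ix d β)) = 0 from
      Finset.sum_eq_zero fun β _ => by rw [Mc_yx]; ring]
    rw [zero_add]
    have h : ∀ β, Mc n d A0 A B c (iy d α) (iy d β) * v (iy d β)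
        = if α = β then (-(n:ℝ) * B α + c) * v (iy d β) else 0 := by
      intro β; rw [Mc_yy]; split_ifs <;> ring
    rw [Finset.sum_congr rfl fun β _ => h β, Finset.sum_ite_eq]
    simp
  rw [row0]
  simp only [rowx, rowy]
  rw [mul_add, Finset.mul_sum, ← Finset.sum_add_distrib, add_assoc, ← Finset.sum_add_distrib]
  congr 1
  · ring
  exact Finset.sum_congr rfl fun α _ => by ring
end


section
variable (n d : ℕ) (A0 : ℝ) (A B : Fin d → ℝ) (c : ℝ)
lemma psd_iff :
    (Mc n d A0 A B c).PosSemidef ↔ ∀ v : Fin (2*d+1) → ℝ, 0 ≤ v ⬝ᵥ (Mc n d A0 A B c) *ᵥ v := by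
  constructor
  · intro h v
    have := h.dotProduct_mulVec_nonneg v
    simpa using this
  · intro h
    exact Matrix.PosSemidef.of_dotProduct_mulVec_nonneg (Mc_herm n d A0 A B c) fun x => by simpa using h x

lemma psd_of_conditions (hn : 2 ≤ n) (hc : 0 ≤ c)
    (hD : ∀ α, 0 ≤ Dc n d B c α)
    (hE : ∀ α, (n:ℝ) * B α ≤ c)
    (hDA : ∀ α, A α ≠ 0 → 0 < Dc n d B c α)
    (hSchur : ∑ α, (n:ℝ) * (A α)^2 / (4 * Dc n d B c α) ≤ A0 - c) :
    (Mc n d A0 A B c).PosSemidef := by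
  rw [psd_iff]
  intro v
  rw [quadform]
  set v0 := v (i0 d) with hv0
  have hsq : Real.sqrt n ^ 2 = n := Real.sq_sqrt (Nat.cast_nonneg n)
  have key : ∀ α : Fin d, -((n:ℝ) * (A α)^2 / (4 * Dc n d B c α)) * v0^2
      ≤ Real.sqrt n * A α * (v0 * v (ix d α))
        + (((n:ℝ)-1) * B α + c/n) * (v (ix d α))^2
        + (-(n:ℝ) * B α + c) * (v (iy d α))^2 := by
    intro α
    have hErm : 0 ≤ (-(n:ℝ) * B α + c) * (v (iy d α))^2 :=
      mul_nonneg (by linarith [hE α]) (sq_nonneg _)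
    rcases eq_or_ne (A α) 0 with hA | hA
    · rw [hA]
      have hDdef : (((n:ℝ)-1) * B α + c/n) = Dc n d B c α := rfl
      rw [hDdef]
      have h1 : 0 ≤ Dc n d B c α * (v (ix d α))^2 := mul_nonneg (hD α) (sq_nonneg _)
      have h2 : -((n:ℝ) * (0:ℝ)^2 / (4 * Dc n d B c α)) * v0^2 = 0 := by norm_num
      rw [h2]
      have h3 : Real.sqrt n * 0 * (v0 * v (ix d α)) = 0 := by ring
      rw [h3, zero_add]
      linarith
    · have hDpos := hDA α hA
      set x := v (ix d α) with hx
      set q := (n:ℝ) * (A α)^2 / (4 * Dc n d B c α) with hq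
      have hD4 : (4 : ℝ) * Dc n d B c α ≠ 0 := by positivity
      have hqm : q * (4 * Dc n d B c α) = (n:ℝ) * (A α)^2 := by
        rw [hq, div_mul_cancel₀ _ hD4]
      have hDdef : (((n:ℝ)-1) * B α + c/n) = Dc n d B c α := rfl
      rw [hDdef]
      have hsq2 := sq_nonneg (2 * Dc n d B c α * x + Real.sqrt n * A α * v0)
      have h6 : 4 * Dc n d B c α * (Real.sqrt n * A α * (v0 * x) + Dc n d B c α * x^2 + q * v0^2)
          = (2 * Dc n d B c α * x + Real.sqrt n * A α * v0)^2 := by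
        linear_combination v0^2 * hqm - (A α)^2 * v0^2 * hsq
      have h8 : 0 ≤ Real.sqrt n * A α * (v0 * x) + Dc n d B c α * x^2 + q * v0^2 := by
        rw [← h6] at hsq2
        nlinarith [hDpos, hsq2]
      linarith [hErm]
  have hsum : ∑ α, (-((n:ℝ) * (A α)^2 / (4 * Dc n d B c α)) * v0^2)
      ≤ ∑ α, (Real.sqrt n * A α * (v0 * v (ix d α))
        + (((n:ℝ)-1) * B α + c/n) * (v (ix d α))^2
        + (-(n:ℝ) * B α + c) * (v (iy d α))^2) :=
    Finset.sum_le_sum fun α _ => key α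
  have hlhs : ∑ α, (-((n:ℝ) * (A α)^2 / (4 * Dc n d B c α)) * v0^2)
      = -(∑ α, (n:ℝ) * (A α)^2 / (4 * Dc n d B c α)) * v0^2 := by
    rw [← Finset.sum_mul, Finset.sum_neg_distrib]
  rw [hlhs] at hsum
  have hfin := mul_le_mul_of_nonneg_right hSchur (sq_nonneg v0)
  linarith
end


section
variable (n d : ℕ) (A0 : ℝ) (A B : Fin d → ℝ) (c : ℝ)
lemma sum_decomp (X Y : Fin d → ℝ) (v0 : ℝ) :
    ∑ α, (Real.sqrt n * A α * (v0 * X α)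
        + (((n:ℝ)-1) * B α + c/n) * (X α)^2
        + (-(n:ℝ) * B α + c) * (Y α)^2)
      = Real.sqrt n * v0 * (∑ α, A α * X α) + ((n:ℝ)-1) * (∑ α, B α * (X α)^2)
        + (c/n) * (∑ α, (X α)^2) + (-(n:ℝ)) * (∑ α, B α * (Y α)^2) + c * (∑ α, (Y α)^2) := by
  have e : ∑ α, (Real.sqrt n * A α * (v0 * X α)
        + (((n:ℝ)-1) * B α + c/n) * (X α)^2
        + (-(n:ℝ) * B α + c) * (Y α)^2)
      = ∑ α, ((Real.sqrt n * v0) * (A α * X α) + (((n:ℝ)-1)) * (B α * (X α)^2)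
          + (c/n) * ((X α)^2) + (-(n:ℝ)) * (B α * (Y α)^2) + c * ((Y α)^2)) :=
    Finset.sum_congr rfl fun α _ => by ring
  rw [e, Finset.sum_add_distrib, Finset.sum_add_distrib, Finset.sum_add_distrib,
    Finset.sum_add_distrib, ← Finset.mul_sum, ← Finset.mul_sum, ← Finset.mul_sum,
    ← Finset.mul_sum, ← Finset.mul_sum]

lemma easy_dir (hd : 1 ≤ d) (hc : 0 ≤ c) (hPSD : (Mc n d A0 A B c).PosSemidef) :
    ∀ X Y : Fin d → ℝ,
      (∑ α, (Y α) ^ 2) + (∑ α, (X α) ^ 2) / n ≤ 1 → 0 ≤ PQ n d A0 A B X Y := by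
  intro X Y hcon
  set v : Fin (2*d+1) → ℝ := fun i =>
    if h0 : i.1 = 0 then 1
    else if h : i.1 ≤ d then X ⟨i.1-1, by omega⟩
    else Y ⟨i.1-d-1, by have := i.2; omega⟩ with hv
  have hv0 : v (i0 d) = 1 := by simp [hv, i0]
  have hvx : ∀ α, v (ix d α) = X α := by
    intro α
    have h := α.2
    simp only [hv, ix]
    rw [dif_neg (by omega), dif_pos (by omega)]
    congr 1
  have hvy : ∀ α, v (iy d α) = Y α := by
    intro α
    have h := α.2
    simp only [hv, iy]
    rw [dif_neg (by omega), dif_neg (by omega)]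
    have he : (⟨d+α.1+1-d-1, by omega⟩ : Fin d) = α := Fin.ext (by simp only [Fin.val_mk]; omega)
    rw [he]
  have hq := (psd_iff n d A0 A B c).mp hPSD v
  rw [quadform] at hq
  rw [hv0] at hq
  have hx : ∀ α, v (ix d α) = X α := hvx
  simp only [hvx, hvy] at hq
  rw [sum_decomp n d A B c X Y 1] at hq
  have hn0 : (n:ℝ) ≠ 0 ∨ True := Or.inr trivial
  have key : (A0 - c) * 1^2 + (Real.sqrt n * 1 * (∑ α, A α * X α)
        + ((n:ℝ)-1) * (∑ α, B α * (X α)^2)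
        + (c/n) * (∑ α, (X α)^2) + (-(n:ℝ)) * (∑ α, B α * (Y α)^2) + c * (∑ α, (Y α)^2))
      = PQ n d A0 A B X Y + c * ((∑ α, (Y α)^2) + (∑ α, (X α)^2)/n - 1) := by
    unfold PQ
    ring
  rw [key] at hq
  have h2 : c * ((∑ α, (Y α)^2) + (∑ α, (X α)^2)/n - 1) ≤ 0 :=
    mul_nonpos_of_nonneg_of_nonpos hc (by linarith)
  linarith

lemma schur_from_hyp (hn : 2 ≤ n)
    (H : ∀ X Y : Fin d → ℝ,
      (∑ α, (Y α)^2) + (∑ α, (X α)^2)/n ≤ 1 → 0 ≤ PQ n d A0 A B X Y)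
    (hD : ∀ α, A α ≠ 0 → 0 < Dc n d B c α)
    (X1 Y1 : Fin d → ℝ) (hsupp : ∀ α, A α ≠ 0 → X1 α = 0)
    (hbudget : (∑ α, (Y1 α)^2) + (∑ α, (X1 α)^2)/n
        + (∑ α, (A α)^2/(4*(Dc n d B c α)^2)) ≤ 1)
    (habsorb : Real.sqrt n * (∑ α, A α * X1 α) + ((n:ℝ)-1) * (∑ α, B α * (X1 α)^2)
        - n * (∑ α, B α * (Y1 α)^2)
        ≤ -c * (1 - ∑ α, (A α)^2/(4*(Dc n d B c α)^2))) :
    ∑ α, (n:ℝ) * (A α)^2/(4 * Dc n d B c α) ≤ A0 - c := by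
  have hnR : (0:ℝ) < n := by positivity
  have hnne : (n:ℝ) ≠ 0 := ne_of_gt hnR
  have hsq : Real.sqrt n ^ 2 = n := Real.sq_sqrt (Nat.cast_nonneg n)
  set t := ∑ α, (A α)^2/(4*(Dc n d B c α)^2) with ht
  set Xs : Fin d → ℝ := fun α => -(Real.sqrt n * A α) / (2 * Dc n d B c α) with hXs
  -- pointwise facts
  have f0 : ∀ α, A α = 0 → Xs α = 0 := by
    intro α hA; simp [hXs, hA]
  have f1 : ∀ α, (Xs α + X1 α)^2 = (Xs α)^2 + (X1 α)^2 := by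
    intro α
    rcases eq_or_ne (A α) 0 with hA | hA
    · rw [f0 α hA]; ring
    · rw [hsupp α hA]; ring
  have f2 : ∀ α, (Xs α)^2 = (n:ℝ) * (A α)^2/(4*(Dc n d B c α)^2) := by
    intro α
    rw [hXs]
    simp only []
    rw [show (-(Real.sqrt n * A α)/(2 * Dc n d B c α))^2
        = (Real.sqrt n * Real.sqrt n) * (A α)^2/(4 * (Dc n d B c α)^2) from by ring,
      Real.mul_self_sqrt (Nat.cast_nonneg n)]
  have f4 : ∀ α, Real.sqrt n * (A α * Xs α) + ((n:ℝ)-1) * (B α * (Xs α)^2)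
      = -((n:ℝ) * (A α)^2/(4 * Dc n d B c α)) - c * ((A α)^2/(4*(Dc n d B c α)^2)) := by
    intro α
    rcases eq_or_ne (A α) 0 with hA | hA
    · rw [f0 α hA, hA]; simp
    · have hDp := hD α hA
      have hBD : ((n:ℝ)-1) * B α = Dc n d B c α - c/n := by
        unfold Dc; ring
      have h2 : ((n:ℝ)-1) * (B α * (Xs α)^2) = (Dc n d B c α - c/n) * (Xs α)^2 := by
        rw [← hBD]; ring
      have f3 : Real.sqrt n * (A α * Xs α) = -((n:ℝ) * (A α)^2/(2 * Dc n d B c α)) := by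
        rw [hXs]
        simp only []
        rw [show Real.sqrt n * (A α * (-(Real.sqrt n * A α)/(2 * Dc n d B c α)))
            = -((Real.sqrt n * Real.sqrt n) * (A α)^2/(2 * Dc n d B c α)) from by ring,
          Real.mul_self_sqrt (Nat.cast_nonneg n)]
      rw [h2, f3, f2 α]
      field_simp
      ring
  -- the sums
  have e1 : ∑ α, A α * (Xs α + X1 α) = (∑ α, A α * Xs α) + ∑ α, A α * X1 α := by
    rw [← Finset.sum_add_distrib]
    exact Finset.sum_congr rfl fun α _ => by ring
  have e2 : ∑ α, B α * ((Xs α + X1 α))^2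
      = (∑ α, B α * (Xs α)^2) + ∑ α, B α * (X1 α)^2 := by
    rw [← Finset.sum_add_distrib]
    exact Finset.sum_congr rfl fun α _ => by rw [f1 α]; ring
  have e3 : Real.sqrt n * (∑ α, A α * Xs α) + ((n:ℝ)-1) * (∑ α, B α * (Xs α)^2)
      = -(∑ α, (n:ℝ) * (A α)^2/(4 * Dc n d B c α)) - c * t := by
    rw [Finset.mul_sum, Finset.mul_sum, ← Finset.sum_add_distrib, ht, Finset.mul_sum,
      ← Finset.sum_neg_distrib, ← Finset.sum_sub_distrib]
    exact Finset.sum_congr rfl fun α _ => f4 α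
  have hXsum : ∑ α, ((Xs α + X1 α))^2 = n * t + ∑ α, (X1 α)^2 := by
    have : ∑ α, ((Xs α + X1 α))^2 = ∑ α, ((Xs α)^2 + (X1 α)^2) :=
      Finset.sum_congr rfl fun α _ => f1 α
    have hsum2 : ∑ α, (Xs α)^2 = (n:ℝ) * t := by
      rw [ht, Finset.mul_sum]
      refine Finset.sum_congr rfl fun α _ => ?_
      rw [f2 α]
      ring
    rw [this, Finset.sum_add_distrib, hsum2]
  -- the point is feasible
  have hcon : (∑ α, (Y1 α)^2) + (∑ α, ((Xs α + X1 α))^2)/n ≤ 1 := by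
    rw [hXsum]
    have : ((n:ℝ) * t + ∑ α, (X1 α)^2)/n = t + (∑ α, (X1 α)^2)/n := by
      rw [add_div, mul_div_cancel_left₀ _ hnne]
    rw [this]
    linarith [hbudget]
  have hPQ0 := H (fun α => Xs α + X1 α) Y1 hcon
  have hPQval : PQ n d A0 A B (fun α => Xs α + X1 α) Y1
      = A0 - (∑ α, (n:ℝ) * (A α)^2/(4 * Dc n d B c α)) - c * t
        + (Real.sqrt n * (∑ α, A α * X1 α) + ((n:ℝ)-1) * (∑ α, B α * (X1 α)^2)
          - n * (∑ α, B α * (Y1 α)^2)) := by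
    unfold PQ
    simp only []
    rw [e1, e2]
    linear_combination e3
  rw [hPQval] at hPQ0
  linarith [habsorb, hPQ0]
end


lemma caseB (n d : ℕ) (hn : 2 ≤ n) (hd : 1 ≤ d)
    (A0 : ℝ) (A B : Fin d → ℝ)
    (H : ∀ X Y : Fin d → ℝ,
      (∑ α, (Y α)^2) + (∑ α, (X α)^2)/n ≤ 1 → 0 ≤ PQ n d A0 A B X Y)
    (hnR : (0:ℝ) < n) (hnne : (n:ℝ) ≠ 0)
    (c0 : ℝ) (hc0 : 0 ≤ c0)
    (hmono : ∀ c1 c2 : ℝ, c1 ≤ c2 → ∀ α, Dc n d B c1 α ≤ Dc n d B c2 α)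
    (hmono' : ∀ c1 c2 : ℝ, c1 ≤ c2 → ∀ α, Dc n d B c2 α = Dc n d B c1 α + (c2 - c1)/n)
    (hD0 : ∀ c', c0 ≤ c' → ∀ α, 0 ≤ Dc n d B c' α)
    (hEc : ∀ c', c0 ≤ c' → ∀ α, (n:ℝ) * B α ≤ c')
    (c1 : ℝ) (hc1ge : c0 ≤ c1)
    (hD1 : ∀ α, A α ≠ 0 → 0 < Dc n d B c1 α)
    (hS1 : 1 ≤ ∑ α, (A α)^2/(4*(Dc n d B c1 α)^2)) :
    ∃ c : ℝ, 0 ≤ c ∧ (Mc n d A0 A B c).PosSemidef := by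
  set S : ℝ → ℝ := fun c => ∑ α, (A α)^2/(4*(Dc n d B c α)^2) with hS
  set K : ℝ := max 1 (∑ α, (A α)^2) with hK
  have hK1 : (1:ℝ) ≤ K := le_max_left _ _
  have hKpos : (0:ℝ) < K := by linarith
  have hKA : ∑ α, (A α)^2 ≤ K := le_max_right _ _
  set c2 := c1 + n * K with hc2
  have hc12 : c1 ≤ c2 := by nlinarith
  have hD2K : ∀ α, K ≤ Dc n d B c2 α := by
    intro α
    rw [hmono' c1 c2 hc12 α]
    have h0 : 0 ≤ Dc n d B c1 α := hD0 c1 hc1ge α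
    have he : (c2 - c1)/(n:ℝ) = K := by
      rw [hc2]
      field_simp
      ring
    rw [he]
    linarith
  have hS2 : S c2 ≤ 1 := by
    have hterm : ∀ α : Fin d, (A α)^2/(4*(Dc n d B c2 α)^2) ≤ (A α)^2/(4*K^2) := by
      intro α
      apply div_le_div_of_nonneg_left (sq_nonneg _) (by positivity)
      nlinarith [hD2K α, hKpos]
    calc S c2 ≤ ∑ α, (A α)^2/(4*K^2) := Finset.sum_le_sum fun α _ => hterm α
      _ = (∑ α, (A α)^2)/(4*K^2) := by rw [Finset.sum_div]
      _ ≤ 1 := by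
          rw [div_le_one (by positivity)]
          nlinarith
  have hcont : ContinuousOn S (Set.Icc c1 c2) := by
    rw [hS]
    apply continuousOn_finset_sum
    intro α _
    rcases eq_or_ne (A α) 0 with hA | hA
    · have hzero : (fun c : ℝ => (A α)^2/(4*(Dc n d B c α)^2)) = fun _ => 0 := by
        funext x
        rw [hA]
        simp
      rw [hzero]
      exact continuousOn_const
    · apply ContinuousOn.div continuousOn_const
      · apply Continuous.continuousOn
        have : Continuous fun c : ℝ => Dc n d B c α := by
          unfold Dc
          fun_prop
        fun_prop
      · intro x hx
        have hpos : 0 < Dc n d B x α := lt_of_lt_of_le (hD1 α hA) (hmono c1 x hx.1 α)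
        have : 0 < 4*(Dc n d B x α)^2 := by positivity
        exact ne_of_gt this
  have hsub := intermediate_value_Icc' hc12 hcont
  have h1mem : (1:ℝ) ∈ Set.Icc (S c2) (S c1) := ⟨hS2, hS1⟩
  obtain ⟨cs, hcsmem, hScs⟩ := hsub h1mem
  have hcsge : c0 ≤ cs := le_trans hc1ge hcsmem.1
  have hcs0 : 0 ≤ cs := le_trans hc0 hcsge
  have hDcs : ∀ α, A α ≠ 0 → 0 < Dc n d B cs α := fun α hA =>
    lt_of_lt_of_le (hD1 α hA) (hmono c1 cs hcsmem.1 α)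
  have hzsum : (∑ α, ((0:Fin d → ℝ) α)^2) = 0 := Finset.sum_eq_zero fun α _ => by simp
  have hzsumA : (∑ α, A α * (0:Fin d → ℝ) α) = 0 := Finset.sum_eq_zero fun α _ => by simp
  have hzsumB : (∑ α, B α * ((0:Fin d → ℝ) α)^2) = 0 := Finset.sum_eq_zero fun α _ => by simp
  have hb : (∑ α, ((0:Fin d → ℝ) α)^2) + (∑ α, ((0:Fin d → ℝ) α)^2)/n
      + (∑ α, (A α)^2/(4*(Dc n d B cs α)^2)) ≤ 1 := by
    rw [hzsum, show (∑ α, (A α)^2/(4*(Dc n d B cs α)^2)) = S cs from rfl, hScs]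
    simp
  have habs : Real.sqrt n * (∑ α, A α * (0:Fin d → ℝ) α)
      + ((n:ℝ)-1) * (∑ α, B α * ((0:Fin d → ℝ) α)^2)
      - n * (∑ α, B α * ((0:Fin d → ℝ) α)^2)
      ≤ -cs * (1 - ∑ α, (A α)^2/(4*(Dc n d B cs α)^2)) := by
    rw [hzsumA, hzsumB, show (∑ α, (A α)^2/(4*(Dc n d B cs α)^2)) = S cs from rfl, hScs]
    simp
  have hSchur := schur_from_hyp n d A0 A B cs hn H hDcs 0 0 (fun α _ => rfl) hb habs
  exact ⟨cs, hcs0, psd_of_conditions n d A0 A B cs hn hcs0 (hD0 cs hcsge) (hEc cs hcsge)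
    hDcs hSchur⟩

lemma forward_dir (n d : ℕ) (hn : 2 ≤ n) (hd : 1 ≤ d)
    (A0 : ℝ) (A B : Fin d → ℝ)
    (H : ∀ X Y : Fin d → ℝ,
      (∑ α, (Y α)^2) + (∑ α, (X α)^2)/n ≤ 1 → 0 ≤ PQ n d A0 A B X Y) :
    ∃ c : ℝ, 0 ≤ c ∧ (Mc n d A0 A B c).PosSemidef := by
  have hnR : (0:ℝ) < n := by positivity
  have hnne : (n:ℝ) ≠ 0 := ne_of_gt hnR
  have hne : (Finset.univ : Finset (Fin d)).Nonempty := ⟨⟨0, hd⟩, Finset.mem_univ _⟩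
  set f : Fin d → ℝ := fun α => max ((n:ℝ) * B α) (-((n:ℝ)*((n:ℝ)-1)) * B α) with hf
  set c0 : ℝ := max (Finset.univ.sup' hne f) 0 with hc0def
  have hc0 : 0 ≤ c0 := le_max_right _ _
  have hc0a : ∀ α, (n:ℝ) * B α ≤ c0 := fun α =>
    le_trans (le_trans (le_max_left _ _) (Finset.le_sup' f (Finset.mem_univ α))) (le_max_left _ _)
  have hc0b : ∀ α, -((n:ℝ)*((n:ℝ)-1)) * B α ≤ c0 := fun α =>
    le_trans (le_trans (le_max_right _ _) (Finset.le_sup' f (Finset.mem_univ α))) (le_max_left _ _)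
  -- monotonicity of Dc in c
  have hmono : ∀ c1 c2 : ℝ, c1 ≤ c2 → ∀ α, Dc n d B c1 α ≤ Dc n d B c2 α := by
    intro c1 c2 h α
    unfold Dc
    have : c1 / (n:ℝ) ≤ c2 / n := div_le_div_of_nonneg_right h hnR.le
    linarith
  have hmono' : ∀ c1 c2 : ℝ, c1 ≤ c2 → ∀ α, Dc n d B c2 α = Dc n d B c1 α + (c2 - c1)/n := by
    intro c1 c2 h α
    unfold Dc
    field_simp
    ring
  have hD0 : ∀ c', c0 ≤ c' → ∀ α, 0 ≤ Dc n d B c' α := by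
    intro c' hc' α
    refine le_trans ?_ (hmono c0 c' hc' α)
    unfold Dc
    have h1 := hc0b α
    have h2 : -((n:ℝ)*((n:ℝ)-1)) * B α / n ≤ c0 / n := div_le_div_of_nonneg_right h1 hnR.le
    have h3 : -((n:ℝ)*((n:ℝ)-1)) * B α / n = -(((n:ℝ)-1) * B α) := by
      field_simp
    linarith
  have hEc : ∀ c', c0 ≤ c' → ∀ α, (n:ℝ) * B α ≤ c' := fun c' hc' α => le_trans (hc0a α) hc'
  set S : ℝ → ℝ := fun c => ∑ α, (A α)^2/(4*(Dc n d B c α)^2) with hS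
  have hSnonneg : ∀ c', 0 ≤ S c' := by
    intro c'
    refine Finset.sum_nonneg fun α _ => by positivity
  by_cases h1 : ∀ α, A α ≠ 0 → 0 < Dc n d B c0 α
  · by_cases h2 : S c0 ≤ 1
    · -- Case A : use c0
      refine ⟨c0, hc0, ?_⟩
      set t := S c0 with htdef
      have ht0 : 0 ≤ t := hSnonneg c0
      have ht1 : t ≤ 1 := h2
      -- find suitable X1 Y1
      have absorbed : ∃ X1 Y1 : Fin d → ℝ, (∀ α, A α ≠ 0 → X1 α = 0)
          ∧ ((∑ α, (Y1 α)^2) + (∑ α, (X1 α)^2)/n + t ≤ 1)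
          ∧ (Real.sqrt n * (∑ α, A α * X1 α) + ((n:ℝ)-1) * (∑ α, B α * (X1 α)^2)
              - n * (∑ α, B α * (Y1 α)^2) ≤ -c0 * (1 - t)) := by
        rcases le_or_gt (Finset.univ.sup' hne f) 0 with hsup | hsup
        · -- c0 = 0
          have hc0eq : c0 = 0 := max_eq_right hsup
          refine ⟨0, 0, fun α _ => rfl, ?_, ?_⟩ <;> simp [hc0eq] <;> linarith
        · -- c0 = f β for some β
          obtain ⟨β, _, hβ⟩ := Finset.exists_mem_eq_sup' hne f
          have hc0eq : c0 = f β := by rw [hc0def, max_eq_left (le_of_lt hsup), hβ]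
          rcases max_choice ((n:ℝ) * B β) (-((n:ℝ)*((n:ℝ)-1)) * B β) with hfb | hfb
          · -- c0 = n * B β : use Y-direction
            have hc0v : c0 = (n:ℝ) * B β := by rw [hc0eq, hf]; exact hfb
            refine ⟨0, fun α => if α = β then Real.sqrt (1 - t) else 0, fun α _ => rfl, ?_, ?_⟩
            · have hY : ∀ α : Fin d, (if α = β then Real.sqrt (1 - t) else 0)^2
                  = if α = β then 1 - t else 0 := by
                intro α
                split_ifs
                · exact Real.sq_sqrt (by linarith)
                · ring
              rw [Finset.sum_congr rfl fun α _ => hY α, Finset.sum_ite_eq' Finset.univ β fun _ => 1 - t]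
              simp
            · have hY : ∀ α : Fin d, B α * (if α = β then Real.sqrt (1 - t) else 0)^2
                  = if α = β then B β * (1 - t) else 0 := by
                intro α
                rcases eq_or_ne α β with rfl | hab
                · rw [if_pos rfl, if_pos rfl, Real.sq_sqrt (by linarith)]
                · rw [if_neg hab, if_neg hab]; ring
              rw [Finset.sum_congr rfl fun α _ => hY α,
                Finset.sum_ite_eq' Finset.univ β fun _ => B β * (1 - t)]
              simp only [Finset.mem_univ, if_true]
              rw [hc0v]
              simp
              nlinarith [Real.sq_sqrt (show (0:ℝ) ≤ 1 - t by linarith)]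
          · -- c0 = -n(n-1) B β : use X-direction, and A β = 0
            have hc0v : c0 = -((n:ℝ)*((n:ℝ)-1)) * B β := by rw [hc0eq, hf]; exact hfb
            have hDβ : Dc n d B c0 β = 0 := by
              unfold Dc
              rw [hc0v]
              field_simp
              ring
            have hAβ : A β = 0 := by
              by_contra hA
              exact absurd hDβ (ne_of_gt (h1 β hA))
            refine ⟨fun α => if α = β then Real.sqrt n * Real.sqrt (1 - t) else 0, 0, ?_, ?_, ?_⟩
            · intro α hA
              rcases eq_or_ne α β with rfl | hab
              · exact absurd hAβ hA
              · exact if_neg hab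
            · have hX : ∀ α : Fin d, (if α = β then Real.sqrt n * Real.sqrt (1 - t) else 0)^2
                  = if α = β then (n:ℝ) * (1 - t) else 0 := by
                intro α
                split_ifs
                · rw [mul_pow, Real.sq_sqrt (by positivity), Real.sq_sqrt (by linarith)]
                · ring
              rw [Finset.sum_congr rfl fun α _ => hX α,
                Finset.sum_ite_eq' Finset.univ β fun _ => (n:ℝ) * (1 - t)]
              simp only [Finset.mem_univ, if_true]
              rw [mul_div_cancel_left₀ _ hnne]
              simp
            · have hAX : ∀ α : Fin d, A α * (if α = β then Real.sqrt n * Real.sqrt (1 - t) else 0)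
                  = 0 := by
                intro α
                rcases eq_or_ne α β with rfl | hab
                · rw [hAβ]; ring
                · rw [if_neg hab]; ring
              have hBX : ∀ α : Fin d, B α * (if α = β then Real.sqrt n * Real.sqrt (1 - t) else 0)^2
                  = if α = β then B β * ((n:ℝ) * (1 - t)) else 0 := by
                intro α
                rcases eq_or_ne α β with rfl | hab
                · rw [if_pos rfl, if_pos rfl, mul_pow, Real.sq_sqrt (by positivity),
                    Real.sq_sqrt (by linarith)]
                · rw [if_neg hab, if_neg hab]; ring
              rw [Finset.sum_congr rfl fun α _ => hAX α,
                Finset.sum_congr rfl fun α _ => hBX α,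
                Finset.sum_ite_eq' Finset.univ β fun _ => B β * ((n:ℝ) * (1 - t))]
              simp only [Finset.mem_univ, if_true, Finset.sum_const_zero]
              rw [show (∑ x : Fin d, B x * ((0 : Fin d → ℝ) x)^2) = 0 from
                Finset.sum_eq_zero fun x _ => by simp]
              rw [hc0v]
              ring_nf
              exact le_refl _
      obtain ⟨X1, Y1, hsupp, hbudget, habsorb⟩ := absorbed
      have hSchur := schur_from_hyp n d A0 A B c0 hn H h1 X1 Y1 hsupp hbudget habsorb
      exact psd_of_conditions n d A0 A B c0 hn hc0 (hD0 c0 le_rfl) (hEc c0 le_rfl) h1 hSchur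
    · -- Case B1
      push_neg at h2
      exact caseB n d hn hd A0 A B H hnR hnne c0 hc0 hmono hmono' hD0 hEc c0 le_rfl h1 h2.le
  · -- Case B2 : some α with A α ≠ 0 and Dc c0 α ≤ 0
    push_neg at h1
    obtain ⟨β, hAβ, hDβ⟩ := h1
    have hDβ' : Dc n d B c0 β ≤ 0 := hDβ
    have hAβpos : 0 < |A β| := abs_pos.mpr hAβ
    set c1 := c0 + n * (|A β|/2 - Dc n d B c0 β) with hc1def
    have hshift : (c1 - c0)/(n:ℝ) = |A β|/2 - Dc n d B c0 β := by
      rw [hc1def]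
      field_simp
      ring
    have hc1ge : c0 ≤ c1 := by
      rw [hc1def]
      nlinarith
    have hD1 : ∀ α, A α ≠ 0 → 0 < Dc n d B c1 α := by
      intro α _
      rw [hmono' c0 c1 hc1ge α, hshift]
      have := hD0 c0 le_rfl α
      linarith
    have hD1β : Dc n d B c1 β = |A β|/2 := by
      rw [hmono' c0 c1 hc1ge β, hshift]
      ring
    have hS1 : 1 ≤ S c0 + 0 ∨ True := Or.inr trivial
    have htermβ : (A β)^2/(4*(Dc n d B c1 β)^2) = 1 := by
      rw [hD1β]
      rw [show (4:ℝ)*((|A β|/2)^2) = |A β|^2 from by ring, sq_abs]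
      exact div_self (pow_ne_zero 2 hAβ)
    have hS1' : 1 ≤ S c1 := by
      rw [hS]
      calc (1:ℝ) = (A β)^2/(4*(Dc n d B c1 β)^2) := htermβ.symm
        _ ≤ ∑ α, (A α)^2/(4*(Dc n d B c1 α)^2) :=
            Finset.single_le_sum (f := fun α => (A α)^2/(4*(Dc n d B c1 α)^2))
              (fun α _ => by positivity) (Finset.mem_univ β)
    exact caseB n d hn hd A0 A B H hnR hnne c0 hc0 hmono hmono' hD0 hEc c1 hc1ge hD1 hS1'


theorem stmt_10 (n d : ℕ) (hn : 2 ≤ n) (hd : 1 ≤ d)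
    (A0 : ℝ) (A B : Fin d → ℝ) :
    (∀ X Y : Fin d → ℝ,
      (∑ α, (Y α) ^ 2) + (∑ α, (X α) ^ 2) / n ≤ 1 →
      0 ≤ PQ n d A0 A B X Y) ↔
    (∃ c : ℝ, 0 ≤ c ∧ (Mc n d A0 A B c).PosSemidef) := by
  constructor
  · intro H
    exact forward_dir n d hn hd A0 A B H
  · rintro ⟨c, hc, hPSD⟩
    exact easy_dir n d A0 A B c hd hc hPSD
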